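/- arXiv:2211.06619 — 4 statements merged into one kernel-verified Lean document; each statement's English description precedes it below -/
import Mathlib

section
/- For any complex vector z ∈ ℂ^m, nonnegative data vector f ∈ ℝ^m, and β > 0, the minimizer of x ↦ (1/2)‖√f − |x|‖² + (β/2)‖x − z‖² over x ∈ ℂ^m is given componentwise by x(t) = ((√f(t) + β|z(t)|)/(1+β))·sign(z(t)) whenever z(t) ≠ 0, where sign(z) = z/|z|. In particular the proximal mapping of the amplitude Gaussian metric has this closed form. -/
lemma agm_quad_min (a b s β : ℝ) (hβ : 0 < β) :
    (1/2)*(a - (a+β*b)/(1+β))^2 + (β/2)*((a+β*b)/(1+β) - b)^2 ≤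
      (1/2)*(a-s)^2 + (β/2)*(s-b)^2 := by
  have h1 : (0:ℝ) < 1+β := by linarith
  have key : (1/2)*(a-s)^2 + (β/2)*(s-b)^2 -
      ((1/2)*(a - (a+β*b)/(1+β))^2 + (β/2)*((a+β*b)/(1+β) - b)^2)
      = ((1+β)/2) * (s - (a+β*b)/(1+β))^2 := by
    field_simp
    ring
  nlinarith [sq_nonneg (s - (a+β*b)/(1+β)), h1.le]

/-- Proximal mapping of the amplitude Gaussian metric (AGM): the minimizer of
`x ↦ (1/2)‖√f − |x|‖² + (β/2)‖x − z‖²` is given componentwise by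
`((√f(t) + β|z(t)|)/(1+β))·sign(z(t))` when `z(t) ≠ 0`. -/
theorem prox_AGM_closed_form (m : ℕ) (z : Fin m → ℂ) (f : Fin m → ℝ)
    (hf : ∀ t, 0 ≤ f t) (β : ℝ) (hβ : 0 < β) (hz : ∀ t, z t ≠ 0)
    (xstar : Fin m → ℂ)
    (hxstar : ∀ t, xstar t =
      (((Real.sqrt (f t) + β * ‖z t‖) / (1 + β) : ℝ) : ℂ) *
        (z t / (‖z t‖ : ℂ))) :
    ∀ x : Fin m → ℂ,
      (1 / 2) * ∑ t, (Real.sqrt (f t) - ‖xstar t‖) ^ 2 +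
          (β / 2) * ∑ t, ‖xstar t - z t‖ ^ 2 ≤
        (1 / 2) * ∑ t, (Real.sqrt (f t) - ‖x t‖) ^ 2 +
          (β / 2) * ∑ t, ‖x t - z t‖ ^ 2 := by
  intro x
  rw [Finset.mul_sum, Finset.mul_sum, Finset.mul_sum, Finset.mul_sum,
    ← Finset.sum_add_distrib, ← Finset.sum_add_distrib]
  apply Finset.sum_le_sum
  intro t _
  set a := Real.sqrt (f t) with ha
  set b := ‖z t‖ with hb
  have hbpos : 0 < b := by
    simpa [hb] using (norm_pos_iff.mpr (hz t))
  have hanneg : 0 ≤ a := Real.sqrt_nonneg _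
  set r := (a + β * b) / (1 + β) with hr
  have hrnn : 0 ≤ r := by positivity
  -- |xstar t| = r
  have habs : ‖xstar t‖ = r := by
    rw [hxstar t]
    rw [norm_mul, norm_div, Complex.norm_real, Complex.norm_real, Real.norm_eq_abs, Real.norm_eq_abs]
    rw [abs_of_nonneg hrnn, abs_of_nonneg hbpos.le]
    field_simp
    rfl
  -- |xstar t - z t| = |r - b|
  have hdiff : ‖xstar t - z t‖ = |r - b| := by
    have hzb : z t = (b:ℂ) * (z t / (b:ℂ)) := by
      rw [mul_div_cancel₀]
      exact_mod_cast hbpos.ne'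
    have hstep : xstar t - z t = (((r - b) : ℝ) : ℂ) * (z t / (b:ℂ)) := by
      rw [hxstar t, ← hr, ← hb]
      nth_rewrite 2 [hzb]
      push_cast
      ring
    rw [hstep, norm_mul, Complex.norm_real, Real.norm_eq_abs, norm_div, Complex.norm_real, Real.norm_eq_abs,
      abs_of_nonneg hbpos.le, ← hb, div_self hbpos.ne', mul_one]
  have hdiff2 : ‖xstar t - z t‖ ^ 2 = (r - b) ^ 2 := by
    rw [hdiff, sq_abs]
  -- lower bound for general x
  have htri : |‖x t‖ - b| ≤ ‖x t - z t‖ := by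
    simpa [hb] using abs_norm_sub_norm_le (x t) (z t)
  have hsq : (‖x t‖ - b) ^ 2 ≤ ‖x t - z t‖ ^ 2 := by
    calc (‖x t‖ - b) ^ 2 = |‖x t‖ - b| ^ 2 := (sq_abs _).symm
    _ ≤ ‖x t - z t‖ ^ 2 := by
        apply pow_le_pow_left₀ (abs_nonneg _) htri
  have key := agm_quad_min a b (‖x t‖) β hβ
  rw [habs, hdiff2]
  have hβ2 : 0 ≤ β / 2 := by linarith
  nlinarith [mul_le_mul_of_nonneg_left hsq hβ2]
end

section
/- For the ptychographic bilinear operator A(w,u) with frames A_j(w,u) = F(w ∘ S_j u), the adjoint of the linear map A_w : u ↦ A(w,u) satisfies A_w* A_w u = (∑_j S_jᵀ |w|²) ∘ u; in particular A_w* A_w is a diagonal (componentwise multiplication) operator on ℂ^n. -/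
open Complex in
/-- For the ptychographic bilinear operator with frames `A_j(w,u) = F(w ∘ S_j u)`
(`F` a unitary DFT, `S_j` patch extractions given by index maps `σ j`),
the operator `A_w* A_w` is the diagonal operator of componentwise multiplication
by `∑_j S_jᵀ |w|²`, stated via the Hermitian inner products:
`⟪A_w u, A_w v⟫ = ⟪u, (∑_j S_jᵀ|w|²) ∘ v⟫` for all `u, v`. -/
theorem ptycho_AwStar_Aw_diagonal (mbar n J : ℕ)
    (F : (Fin mbar → ℂ) →ₗ[ℂ] (Fin mbar → ℂ))
    (hF : ∀ a b : Fin mbar → ℂ,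
      ∑ t, (starRingEnd ℂ) (F a t) * F b t = ∑ t, (starRingEnd ℂ) (a t) * b t)
    (σ : Fin J → Fin mbar → Fin n) (w : Fin mbar → ℂ) :
    ∀ u v : Fin n → ℂ,
      ∑ j, ∑ t, (starRingEnd ℂ) (F (fun s => w s * u (σ j s)) t) *
          F (fun s => w s * v (σ j s)) t =
        ∑ i, (starRingEnd ℂ) (u i) *
          (((∑ j, ∑ s, if σ j s = i then ‖w s‖ ^ 2 else 0 : ℝ) : ℂ) * v i) := by
  intro u v
  simp only [hF]
  have lhs : ∀ j : Fin J, ∑ t, (starRingEnd ℂ) (w t * u (σ j t)) * (w t * v (σ j t)) =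
      ∑ t, ∑ i, if σ j t = i then
        ((‖w t‖ ^ 2 : ℝ) : ℂ) * ((starRingEnd ℂ) (u i) * v i) else 0 := by
    intro j
    refine Finset.sum_congr rfl fun t _ => ?_
    rw [Finset.sum_ite_eq Finset.univ (σ j t)
      (fun i => ((‖w t‖ ^ 2 : ℝ) : ℂ) * ((starRingEnd ℂ) (u i) * v i))]
    simp only [Finset.mem_univ, if_true, map_mul, ← Complex.ofReal_pow,
      Complex.sq_norm, ← Complex.mul_conj]
    ring
  simp only [lhs]
  have swap : ∀ f : Fin J → Fin mbar → Fin n → ℂ,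
      ∑ j, ∑ t, ∑ i, f j t i = ∑ i, ∑ j, ∑ t, f j t i := by
    intro f
    calc ∑ j, ∑ t, ∑ i, f j t i
        = ∑ j, ∑ i, ∑ t, f j t i :=
          Finset.sum_congr rfl fun j _ => Finset.sum_comm
      _ = ∑ i, ∑ j, ∑ t, f j t i := Finset.sum_comm
  rw [swap]
  refine Finset.sum_congr rfl fun i _ => ?_
  push_cast
  simp only [Finset.mul_sum, Finset.sum_mul]
  refine Finset.sum_congr rfl fun j _ => Finset.sum_congr rfl fun t _ => ?_
  split <;> push_cast <;> ring
end

section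
/- ST-AGM preserves global minimizers: for fixed b > 0 and ε ∈ (0,1), the set of global minimizers of x ↦ M_ε(x,b) over x ∈ ℂ equals the set of global minimizers of x ↦ (1/2)(|x| − √b)² (the AGM), namely the circle {x : |x| = √b}. -/
/-- ST-AGM preserves global minimizers: for `b > 0` and `ε ∈ (0,1)`, the global
minimizers of `x ↦ M_ε(x,b)` coincide with those of the AGM `x ↦ (1/2)(|x|−√b)²`,
namely the circle `{x : |x| = √b}`. -/
theorem ST_AGM_same_minimizers (ε b : ℝ) (hε : 0 < ε) (hε1 : ε < 1) (hb : 0 < b)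
    (M : ℂ → ℝ)
    (hM : ∀ x : ℂ, M x =
      if ‖x‖ < ε * Real.sqrt b then
        ((1 - ε) / 2) * (b - ‖x‖ ^ 2 / ε)
      else (1 / 2) * (‖x‖ - Real.sqrt b) ^ 2)
    (G : ℂ → ℝ) (hG : ∀ x : ℂ, G x = (1 / 2) * (‖x‖ - Real.sqrt b) ^ 2) :
    (∀ x : ℂ, (∀ y, M x ≤ M y) ↔ (∀ y, G x ≤ G y)) ∧
    (∀ x : ℂ, (∀ y, M x ≤ M y) ↔ ‖x‖ = Real.sqrt b) := by
  have hsb : (0:ℝ) < Real.sqrt b := Real.sqrt_pos.2 hb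
  have hbb : Real.sqrt b ^ 2 = b := Real.sq_sqrt hb.le
  have habs0 : ‖((Real.sqrt b : ℝ) : ℂ)‖ = Real.sqrt b := by
    rw [Complex.norm_real, Real.norm_eq_abs, abs_of_nonneg hsb.le]
  -- M is nonnegative
  have hMnn : ∀ x, 0 ≤ M x := by
    intro x
    rw [hM]
    split_ifs with h
    · have h0 : (0:ℝ) ≤ ‖x‖ := norm_nonneg x
      have h2 : ‖x‖ ^ 2 < (ε * Real.sqrt b) ^ 2 := by nlinarith
      have h3 : ‖x‖ ^ 2 / ε < ε * b := by
        rw [div_lt_iff₀ hε]; nlinarith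
      have : ‖x‖ ^ 2 / ε < b := lt_of_lt_of_le h3 (by nlinarith)
      nlinarith
    · positivity
  -- M vanishes on the circle
  have hMzero : ∀ x, ‖x‖ = Real.sqrt b → M x = 0 := by
    intro x hx
    rw [hM, hx, if_neg (by nlinarith), sub_self]
    ring
  -- M x ≤ 0 implies |x| = √b
  have hMle : ∀ x, M x ≤ 0 → ‖x‖ = Real.sqrt b := by
    intro x hx
    rw [hM] at hx
    split_ifs at hx with h
    · exfalso
      have h0 : (0:ℝ) ≤ ‖x‖ := norm_nonneg x
      have h2 : ‖x‖ ^ 2 < (ε * Real.sqrt b) ^ 2 := by nlinarith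
      have h3 : ‖x‖ ^ 2 / ε < ε * b := by
        rw [div_lt_iff₀ hε]; nlinarith
      have h4 : ‖x‖ ^ 2 / ε < b := lt_of_lt_of_le h3 (by nlinarith)
      nlinarith
    · have : (‖x‖ - Real.sqrt b) ^ 2 ≤ 0 := by nlinarith
      have := le_antisymm this (sq_nonneg _)
      have := pow_eq_zero_iff (n := 2) (by norm_num) |>.mp this
      linarith [sub_eq_zero.mp this]
  have hMmin : ∀ x : ℂ, (∀ y, M x ≤ M y) ↔ ‖x‖ = Real.sqrt b := by
    intro x
    constructor
    · intro hmin
      exact hMle x (le_trans (hmin ((Real.sqrt b : ℝ) : ℂ))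
        (le_of_eq (hMzero _ habs0)))
    · intro hx y
      rw [hMzero x hx]; exact hMnn y
  have hGmin : ∀ x : ℂ, (∀ y, G x ≤ G y) ↔ ‖x‖ = Real.sqrt b := by
    intro x
    constructor
    · intro hmin
      have h := hmin ((Real.sqrt b : ℝ) : ℂ)
      rw [hG, hG, habs0, sub_self] at h
      have : (‖x‖ - Real.sqrt b) ^ 2 ≤ 0 := by nlinarith
      have := le_antisymm this (sq_nonneg _)
      have := pow_eq_zero_iff (n := 2) (by norm_num) |>.mp this
      linarith [sub_eq_zero.mp this]
    · intro hx y
      rw [hG, hG, hx, sub_self]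
      nlinarith [sq_nonneg (‖y‖ - Real.sqrt b)]
  exact ⟨fun x => (hMmin x).trans (hGmin x).symm, hMmin⟩
end

section
/- Closed form proximal map of ST-AGM (scalar outer case): for y ∈ ℂ, b ≥ 0, ε ∈ (0,1), β > (1−ε)/ε, if |y| ≥ ε − ((1−ε)/β)√b then the minimizer of x ↦ M_ε(x,b) + (β/2)|x − y|² restricted to {x : |x| ≥ ε√b} equals ((√b + β|y|)/(1+β))·sign(y) whenever this value has modulus ≥ ε√b and y ≠ 0. -/
/-- Closed form of the proximal map of the smooth truncated AGM on the outer
region: for `y ≠ 0`, `b ≥ 0`, `ε ∈ (0,1)`, `β > (1−ε)/ε`, if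
`|y| ≥ ε − ((1−ε)/β)√b` and `ρ* := (√b + β|y|)/(1+β) ≥ ε√b`, then
`x* = ρ*·sign(y)` minimizes `x ↦ (1/2)(|x|−√b)² + (β/2)|x−y|²` over
`{x : |x| ≥ ε√b}` (on which `M_ε` coincides with the outer branch). -/
theorem prox_ST_AGM_outer (y : ℂ) (hy0 : y ≠ 0) (b : ℝ) (hb : 0 ≤ b)
    (ε : ℝ) (hε : 0 < ε) (hε1 : ε < 1) (β : ℝ) (hβ : (1 - ε) / ε < β)
    (hy : ε - ((1 - ε) / β) * Real.sqrt b ≤ ‖y‖)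
    (ρstar : ℝ) (hρdef : ρstar = (Real.sqrt b + β * ‖y‖) / (1 + β))
    (hρ : ε * Real.sqrt b ≤ ρstar)
    (xstar : ℂ)
    (hxstar : xstar = (ρstar : ℂ) * (y / (‖y‖ : ℂ))) :
    ε * Real.sqrt b ≤ ‖xstar‖ ∧
    ∀ x : ℂ, ε * Real.sqrt b ≤ ‖x‖ →
      (1 / 2) * (‖xstar‖ - Real.sqrt b) ^ 2 +
          (β / 2) * ‖xstar - y‖ ^ 2 ≤
        (1 / 2) * (‖x‖ - Real.sqrt b) ^ 2 +
          (β / 2) * ‖x - y‖ ^ 2 := by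
  have hr : 0 < ‖y‖ := by
    exact norm_pos_iff.mpr hy0
  set r := ‖y‖ with hrdef
  have hβ0 : 0 < β := lt_trans (div_pos (by linarith) hε) hβ
  have hρ0 : 0 ≤ ρstar :=
    le_trans (mul_nonneg hε.le (Real.sqrt_nonneg b)) hρ
  -- |xstar| = ρstar
  have habs : ‖xstar‖ = ρstar := by
    rw [hxstar, norm_mul, norm_div, Complex.norm_real, Complex.norm_real,
      Real.norm_eq_abs, Real.norm_eq_abs, abs_of_nonneg hρ0, abs_of_nonneg hr.le]
    field_simp
    rfl
  -- |xstar - y| = |ρstar - r|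
  have hdiff : xstar - y = ((ρstar - r : ℝ) : ℂ) * (y / (r : ℂ)) := by
    rw [hxstar]
    have hrne : (r : ℂ) ≠ 0 := by exact_mod_cast hr.ne'
    field_simp
    push_cast; ring
  have habs2 : ‖xstar - y‖ = |ρstar - r| := by
    rw [hdiff, norm_mul, norm_div, Complex.norm_real, Complex.norm_real,
      Real.norm_eq_abs, Real.norm_eq_abs, abs_of_nonneg hr.le]
    field_simp
    exact mul_comm _ _
  have habs2sq : ‖xstar - y‖ ^ 2 = (ρstar - r) ^ 2 := by
    rw [habs2, sq_abs]
  refine ⟨habs ▸ hρ, fun x hx => ?_⟩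
  rw [habs, habs2sq]
  set s := ‖x‖ with hsdef
  have h1 : s - r ≤ ‖x - y‖ := by
    simpa [hsdef, hrdef] using norm_sub_norm_le x y
  have h2 : r - s ≤ ‖x - y‖ := by
    have h := norm_sub_norm_le y x
    rw [norm_sub_rev y x] at h
    simpa [hsdef, hrdef] using h
  have h3 : (s - r) ^ 2 ≤ ‖x - y‖ ^ 2 := by
    nlinarith [norm_nonneg (x - y)]
  have hkey : (1 / 2) * (ρstar - Real.sqrt b) ^ 2 + (β / 2) * (ρstar - r) ^ 2 ≤
      (1 / 2) * (s - Real.sqrt b) ^ 2 + (β / 2) * (s - r) ^ 2 := by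
    have hρeq : ρstar * (1 + β) = Real.sqrt b + β * r := by
      rw [hρdef]; field_simp
    nlinarith [sq_nonneg (s - ρstar), hβ0]
  nlinarith [hkey, h3, hβ0]
end
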